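/- Assume setting (C1). For each n ≥ 1 let (E_n,F_n) be a resistance form on A_n with F_n ⊆ C(A_n), and let (E,F) be a resistance form on A with F ⊆ C(A). If (E_n,F_n) Γ-converges to (E,F) on C(B) and each (E_n,F_n) is local, then (E,F) is local. -/

import Mathlib

open Filter Topology

/-- A resistance form `(E, F)` on a set `X` in the sense of Kigami.
`dom` models the domain `F ⊆ l(X)` and `en` models the bilinear form `E`
(its values outside `dom × dom` are irrelevant). -/
structure ResistanceForm (X : Type*) where
  dom : Set (X → ℝ)
  en : (X → ℝ) → (X → ℝ) → ℝ
  dom_const : ∀ a : ℝ, (fun _ => a) ∈ dom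
  dom_add : ∀ f g, f ∈ dom → g ∈ dom → f + g ∈ dom
  dom_smul : ∀ (a : ℝ) f, f ∈ dom → a • f ∈ dom
  symm : ∀ f g, en f g = en g f
  add_left : ∀ f g h, f ∈ dom → g ∈ dom → h ∈ dom →
    en (f + g) h = en f h + en g h
  smul_left : ∀ (a : ℝ) f g, f ∈ dom → g ∈ dom → en (a • f) g = a * en f g
  nonneg : ∀ f, f ∈ dom → 0 ≤ en f f
  /-- (RF1): `E(f,f) = 0` iff `f` is constant. -/
  en_eq_zero_iff : ∀ f, f ∈ dom → (en f f = 0 ↔ ∃ a : ℝ, ∀ x, f x = a)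
  /-- (RF2): the quotient of `dom` by constants is complete in the `E`-norm. -/
  complete : ∀ u : ℕ → X → ℝ, (∀ n, u n ∈ dom) →
    (∀ ε > (0:ℝ), ∃ N, ∀ m ≥ N, ∀ n ≥ N, en (u m - u n) (u m - u n) < ε) →
    ∃ v ∈ dom, Tendsto (fun n => en (u n - v) (u n - v)) atTop (𝓝 0)
  /-- (RF3): finite sets admit arbitrary extensions. -/
  exten : ∀ (V : Finset X) (u : X → ℝ), ∃ f ∈ dom, ∀ x ∈ V, f x = u x
  /-- (RF4): the effective resistance between any two points is finite. -/
  resist_fin : ∀ x y : X, ∃ C : ℝ, ∀ f ∈ dom, (f x - f y) ^ 2 ≤ C * en f f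
  /-- (RF5): the Markov property. -/
  markov : ∀ f ∈ dom, (fun x => min (max (f x) 0) 1) ∈ dom ∧
    en (fun x => min (max (f x) 0) 1) (fun x => min (max (f x) 0) 1) ≤ en f f

open Classical in
/-- The quadratic form of a resistance form, extended by `+∞` off its domain. -/
noncomputable def exEn {X : Type*} (RF : ResistanceForm X) (f : X → ℝ) : EReal :=
  if f ∈ RF.dom then ((RF.en f f : ℝ) : EReal) else ⊤

/-- A resistance form on a topological space is local if `E(f,g) = 0` whenever
`f, g` in its domain have disjoint supports. -/
def IsLocalRF {X : Type*} [TopologicalSpace X] (RF : ResistanceForm X) : Prop :=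
  ∀ f ∈ RF.dom, ∀ g ∈ RF.dom, Disjoint (tsupport f) (tsupport g) → RF.en f g = 0

namespace ResistanceForm
variable {X : Type*} (RF : ResistanceForm X)

lemma dom_neg {f : X → ℝ} (hf : f ∈ RF.dom) : -f ∈ RF.dom := by
  have := RF.dom_smul (-1) f hf
  simpa using this

lemma dom_sub {f g : X → ℝ} (hf : f ∈ RF.dom) (hg : g ∈ RF.dom) : f - g ∈ RF.dom := by
  have := RF.dom_add f (-g) hf (RF.dom_neg hg)
  simpa [sub_eq_add_neg] using this

lemma en_smul_right (a : ℝ) (f g : X → ℝ) (hf : f ∈ RF.dom) (hg : g ∈ RF.dom) :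
    RF.en f (a • g) = a * RF.en f g := by
  rw [RF.symm, RF.smul_left a g f hg hf, RF.symm g f]

lemma en_add_right (f g h : X → ℝ) (hf : f ∈ RF.dom) (hg : g ∈ RF.dom) (hh : h ∈ RF.dom) :
    RF.en f (g + h) = RF.en f g + RF.en f h := by
  rw [RF.symm, RF.add_left g h f hg hh hf, RF.symm g f, RF.symm h f]

lemma en_expand (f g : X → ℝ) (a : ℝ) (hf : f ∈ RF.dom) (hg : g ∈ RF.dom) :
    RF.en (f + a • g) (f + a • g)
      = RF.en f f + 2 * a * RF.en f g + a ^ 2 * RF.en g g := by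
  have hag : a • g ∈ RF.dom := RF.dom_smul a g hg
  have hsum : f + a • g ∈ RF.dom := RF.dom_add _ _ hf hag
  rw [RF.add_left f (a • g) (f + a • g) hf hag hsum,
    RF.en_add_right f f (a • g) hf hf hag,
    RF.en_add_right (a • g) f (a • g) hag hf hag,
    RF.smul_left a g f hg hf,
    RF.en_smul_right a f g hf hg, RF.en_smul_right a (a • g) g hag hg,
    RF.smul_left a g g hg hg, RF.symm g f]
  ring

lemma en_const_left (c : ℝ) (f : X → ℝ) (hf : f ∈ RF.dom) :
    RF.en (fun _ => c) f = 0 := by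
  have hcc : RF.en (fun _ => c) (fun _ => c) = 0 := by
    rw [RF.en_eq_zero_iff _ (RF.dom_const c)]
    exact ⟨c, fun _ => rfl⟩
  set e := RF.en (fun _ => c) f with he
  set q := RF.en f f with hq
  have hqnn : 0 ≤ q := RF.nonneg f hf
  have key : ∀ t : ℝ, 0 ≤ 2 * t * e + t ^ 2 * q := by
    intro t
    have h0 := RF.nonneg _ (RF.dom_add _ _ (RF.dom_const c) (RF.dom_smul t f hf))
    rw [RF.en_expand (fun _ => c) f t (RF.dom_const c) hf, hcc] at h0
    linarith
  have h := key (-(e / (q + 1)))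
  have hq1 : (0:ℝ) < q + 1 := by linarith
  have h2 : 0 ≤ (2 * -(e / (q + 1)) * e + (-(e / (q + 1))) ^ 2 * q) * (q + 1) ^ 2 :=
    mul_nonneg h (sq_nonneg _)
  have h3 : (2 * -(e / (q + 1)) * e + (-(e / (q + 1))) ^ 2 * q) * (q + 1) ^ 2
      = -(e ^ 2) * (q + 2) := by
    field_simp
    ring
  rw [h3] at h2
  have h4 : e ^ 2 = 0 := by nlinarith [sq_nonneg e]
  have : e = 0 := by
    have := sq_eq_zero_iff.mp h4
    exact this
  exact this

lemma en_const_right (c : ℝ) (f : X → ℝ) (hf : f ∈ RF.dom) :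
    RF.en f (fun _ => c) = 0 := by
  rw [RF.symm]; exact RF.en_const_left c f hf

lemma en_self_add_const (f : X → ℝ) (hf : f ∈ RF.dom) (d : ℝ) :
    RF.en (f + fun _ => d) (f + fun _ => d) = RF.en f f := by
  have hc : (fun _ => d) ∈ RF.dom := RF.dom_const d
  have hsum : f + (fun _ => d) ∈ RF.dom := RF.dom_add _ _ hf hc
  rw [RF.add_left f (fun _ => d) _ hf hc hsum,
    RF.en_add_right f f (fun _ => d) hf hf hc,
    RF.en_add_right (fun _ => d) f (fun _ => d) hc hf hc,
    RF.en_const_right d f hf, RF.en_const_left d f hf,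
    RF.en_const_left d (fun _ => d) hc]
  ring

lemma en_smul_self (a : ℝ) (f : X → ℝ) (hf : f ∈ RF.dom) :
    RF.en (a • f) (a • f) = a ^ 2 * RF.en f f := by
  have haf : a • f ∈ RF.dom := RF.dom_smul a f hf
  rw [RF.smul_left a f (a • f) hf haf, RF.en_smul_right a f f hf hf]
  ring

lemma en_sub_left (f g h : X → ℝ) (hf : f ∈ RF.dom) (hg : g ∈ RF.dom) (hh : h ∈ RF.dom) :
    RF.en (f - g) h = RF.en f h - RF.en g h := by
  have h1 : f - g = f + (-1 : ℝ) • g := by funext x; simp [sub_eq_add_neg]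
  rw [h1, RF.add_left f ((-1:ℝ) • g) h hf (RF.dom_smul _ _ hg) hh,
    RF.smul_left (-1) g h hg hh]
  ring

lemma en_sub_right (f g h : X → ℝ) (hf : f ∈ RF.dom) (hg : g ∈ RF.dom) (hh : h ∈ RF.dom) :
    RF.en f (g - h) = RF.en f g - RF.en f h := by
  rw [RF.symm, RF.en_sub_left g h f hg hh hf, RF.symm g f, RF.symm h f]

lemma cutoff_spec (f : X → ℝ) (hf : f ∈ RF.dom) (c M : ℝ) (hM : 0 < M) :
    (fun x => min (max (f x - c) 0) M) ∈ RF.dom ∧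
    RF.en (fun x => min (max (f x - c) 0) M) (fun x => min (max (f x - c) 0) M)
      ≤ RF.en f f := by
  set fc : X → ℝ := f + (fun _ => -c) with hfc
  have hfcd : fc ∈ RF.dom := RF.dom_add _ _ hf (RF.dom_const _)
  have hfce : RF.en fc fc = RF.en f f := RF.en_self_add_const f hf (-c)
  set q : X → ℝ := M⁻¹ • fc with hqdef
  have hqd : q ∈ RF.dom := RF.dom_smul _ _ hfcd
  have hqe : RF.en q q = M⁻¹ ^ 2 * RF.en f f := by
    rw [hqdef, RF.en_smul_self M⁻¹ fc hfcd, hfce]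
  obtain ⟨hθd, hθe⟩ := RF.markov q hqd
  set θ : X → ℝ := fun x => min (max (q x) 0) 1 with hθdef
  have key : (fun x => min (max (f x - c) 0) M) = M • θ := by
    funext x
    show min (max (f x - c) 0) M = M * min (max (q x) 0) 1
    have hqx : q x = M⁻¹ * (f x - c) := by
      simp [hqdef, hfc, smul_eq_mul]
      ring
    rw [hqx, mul_min_of_nonneg _ _ hM.le, mul_max_of_nonneg _ _ hM.le,
      mul_inv_cancel_left₀ (ne_of_gt hM), mul_zero, mul_one]
  constructor
  · rw [key]; exact RF.dom_smul M θ hθd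
  · rw [key, RF.en_smul_self M θ hθd]
    have h1 : M ^ 2 * RF.en θ θ ≤ M ^ 2 * RF.en q q :=
      mul_le_mul_of_nonneg_left hθe (sq_nonneg M)
    have h2 : M ^ 2 * RF.en q q = RF.en f f := by
      rw [hqe]
      field_simp
    linarith

end ResistanceForm

lemma cutoff_lipschitz (a b M : ℝ) :
    |min (max a 0) M - min (max b 0) M| ≤ |a - b| := by
  have h := le_abs_self (a - b)
  have h' := neg_abs_le (a - b)
  rw [abs_le]
  constructor <;> simp only [min_def, max_def] <;> split_ifs <;> linarith

lemma one_ext {B : Type*} [MetricSpace B] [CompactSpace B]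
    (Ainf : Set B) (hAinfc : IsCompact Ainf)
    (f : ↥Ainf → ℝ) (hf : Continuous f) (hfnn : ∀ x, 0 ≤ f x)
    (hKne : (Subtype.val '' tsupport f).Nonempty) (δ : ℝ) (hδ : 0 < δ) :
    ∃ F : B → ℝ, Continuous F ∧ (∀ b, 0 ≤ F b) ∧ Ainf.restrict F = f ∧
      tsupport F ⊆ Metric.cthickening δ (Subtype.val '' tsupport f) := by
  obtain ⟨F₀, hF₀⟩ := ContinuousMap.exists_restrict_eq (s := Ainf) hAinfc.isClosed ⟨f, hf⟩
  have hF₀x : ∀ x : ↥Ainf, F₀ ↑x = f x := fun x => by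
    have := DFunLike.congr_fun hF₀ x
    simpa using this
  set K := Subtype.val '' tsupport f with hK
  set bf : B → ℝ := fun b => max (1 - δ⁻¹ * Metric.infDist b K) 0 with hbf
  have hbf_cont : Continuous bf :=
    (continuous_const.sub (continuous_const.mul (Metric.continuous_infDist_pt K))).max
      continuous_const
  refine ⟨fun b => max (F₀ b * bf b) 0, (F₀.continuous.mul hbf_cont).max continuous_const,
    fun b => le_max_right _ _, ?_, ?_⟩
  · funext x
    show max (F₀ ↑x * bf ↑x) 0 = f x
    by_cases hx : x ∈ tsupport f
    · have hxK : (↑x : B) ∈ K := ⟨x, hx, rfl⟩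
      have h0 : Metric.infDist (↑x : B) K = 0 := Metric.infDist_zero_of_mem hxK
      have hb1 : bf ↑x = 1 := by simp [hbf, h0]
      rw [hb1, mul_one, hF₀x x]
      exact max_eq_left (hfnn x)
    · have hfx : f x = 0 := image_eq_zero_of_notMem_tsupport hx
      rw [hF₀x x, hfx, zero_mul]
      simp
  · apply closure_minimal _ (Metric.isClosed_cthickening)
    intro b hb
    have hFb : max (F₀ b * bf b) 0 ≠ 0 := hb
    have hbfb : bf b ≠ 0 := by
      intro h; apply hFb; rw [h, mul_zero]; simp
    have hpos : 0 < 1 - δ⁻¹ * Metric.infDist b K := by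
      rcases le_or_gt (1 - δ⁻¹ * Metric.infDist b K) 0 with h | h
      · exact absurd (max_eq_right h) hbfb
      · exact h
    have hdK : Metric.infDist b K < δ := by
      have h1 : δ⁻¹ * Metric.infDist b K < 1 := by linarith
      have h2 : δ * (δ⁻¹ * Metric.infDist b K) < δ * 1 :=
        mul_lt_mul_of_pos_left h1 hδ
      rwa [mul_inv_cancel_left₀ (ne_of_gt hδ), mul_one] at h2
    obtain ⟨y, hyK, hyd⟩ := (Metric.infDist_lt_iff hKne).mp hdK
    exact Metric.mem_cthickening_of_dist_le b y δ K hyK hyd.le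

lemma exists_nice_extension {B : Type*} [MetricSpace B] [CompactSpace B]
    (Ainf : Set B) (hAinfc : IsCompact Ainf)
    (f g : ↥Ainf → ℝ) (hf : Continuous f) (hg : Continuous g)
    (hfnn : ∀ x, 0 ≤ f x) (hgnn : ∀ x, 0 ≤ g x)
    (hdisj : Disjoint (tsupport f) (tsupport g))
    (hfne : ∃ x, f x ≠ 0) (hgne : ∃ x, g x ≠ 0) :
    ∃ F G : B → ℝ, Continuous F ∧ Continuous G ∧ (∀ b, 0 ≤ F b) ∧ (∀ b, 0 ≤ G b) ∧
      Ainf.restrict F = f ∧ Ainf.restrict G = g ∧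
      Disjoint (tsupport F) (tsupport G) := by
  haveI : CompactSpace ↥Ainf := isCompact_iff_compactSpace.mp hAinfc
  set Kf := Subtype.val '' tsupport f with hKf
  set Kg := Subtype.val '' tsupport g with hKg
  have hKfc : IsCompact Kf :=
    ((isClosed_tsupport f).isCompact).image continuous_subtype_val
  have hKgc : IsCompact Kg :=
    ((isClosed_tsupport g).isCompact).image continuous_subtype_val
  have hKdisj : Disjoint Kf Kg :=
    Set.disjoint_image_of_injective Subtype.val_injective hdisj
  obtain ⟨δ, hδ, hδdisj⟩ := hKdisj.exists_cthickenings hKfc hKgc.isClosed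
  have hKfne : Kf.Nonempty := by
    obtain ⟨x, hx⟩ := hfne
    exact ⟨↑x, x, subset_tsupport f hx, rfl⟩
  have hKgne : Kg.Nonempty := by
    obtain ⟨x, hx⟩ := hgne
    exact ⟨↑x, x, subset_tsupport g hx, rfl⟩
  obtain ⟨F, hFc, hFnn, hFr, hFs⟩ := one_ext Ainf hAinfc f hf hfnn hKfne δ hδ
  obtain ⟨G, hGc, hGnn, hGr, hGs⟩ := one_ext Ainf hAinfc g hg hgnn hKgne δ hδ
  exact ⟨F, G, hFc, hGc, hFnn, hGnn, hFr, hGr, hδdisj.mono hFs hGs⟩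


set_option maxHeartbeats 1600000 in
/-- Under setting (C1), if resistance forms `(E n, F n)` on
`A n` with `F n ⊆ C(A n)` Γ-converge on `C(B)` to a resistance form `(E, F)`
on `A` with `F ⊆ C(A)`, and each `(E n, F n)` is local, then `(E, F)` is local. -/
theorem stmt7 {B : Type*} [MetricSpace B] [CompactSpace B]
    (A : ℕ → Set B) (Ainf : Set B)
    (hAc : ∀ n, IsCompact (A n)) (hAne : ∀ n, (A n).Nonempty)
    (hAinfc : IsCompact Ainf) (hAinfne : Ainf.Nonempty)
    (hH : Tendsto (fun n => Metric.hausdorffDist (A n) Ainf) atTop (𝓝 0))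
    (RF : (n : ℕ) → ResistanceForm ↥(A n)) (RFinf : ResistanceForm ↥Ainf)
    (hdomc : ∀ n, ∀ f ∈ (RF n).dom, Continuous f)
    (hdomcinf : ∀ f ∈ RFinf.dom, Continuous f)
    (hGamma₁ : ∀ (g : ℕ → B → ℝ) (ginf : B → ℝ),
      (∀ n, Continuous (g n)) → Continuous ginf →
      TendstoUniformly g ginf atTop →
      exEn RFinf (Ainf.restrict ginf) ≤
        Filter.liminf (fun n => exEn (RF n) ((A n).restrict (g n))) atTop)
    (hGamma₂ : ∀ ginf : B → ℝ, Continuous ginf →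
      ∃ g : ℕ → B → ℝ, (∀ n, Continuous (g n)) ∧
        TendstoUniformly g ginf atTop ∧
        Tendsto (fun n => exEn (RF n) ((A n).restrict (g n))) atTop
          (𝓝 (exEn RFinf (Ainf.restrict ginf))))
    (hlocal : ∀ n, IsLocalRF (RF n)) :
    IsLocalRF RFinf := by
  haveI : CompactSpace ↥Ainf := isCompact_iff_compactSpace.mp hAinfc
  haveI : Nonempty ↥Ainf := hAinfne.to_subtype
  haveI : Nonempty B := ⟨hAinfne.choose⟩
  have key : ∀ f ∈ RFinf.dom, ∀ g ∈ RFinf.dom, (∀ x, 0 ≤ f x) → (∀ x, 0 ≤ g x) →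
      Disjoint (tsupport f) (tsupport g) → RFinf.en f g = 0 := by
    intro f hf g hg hfnn hgnn hdisj
    by_cases hf0 : ∀ x, f x = 0
    · have hfz : f = fun _ => (0:ℝ) := funext hf0
      rw [hfz]
      exact RFinf.en_const_left 0 g hg
    by_cases hg0 : ∀ x, g x = 0
    · have hgz : g = fun _ => (0:ℝ) := funext hg0
      rw [hgz]
      exact RFinf.en_const_right 0 f hf
    push_neg at hf0 hg0
    obtain ⟨F, G, hFc, hGc, hFnn, hGnn, hFr, hGr, hFGdisj⟩ :=
      exists_nice_extension Ainf hAinfc f g (hdomcinf f hf) (hdomcinf g hg)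
        hfnn hgnn hdisj hf0 hg0
    obtain ⟨fs, hfsc, hfsu, hfst⟩ := hGamma₂ F hFc
    obtain ⟨gs, hgsc, hgsu, hgst⟩ := hGamma₂ G hGc
    set Φ : C(B, ℝ) := ⟨F, hFc⟩ with hΦ
    set Ψ : C(B, ℝ) := ⟨G, hGc⟩ with hΨ
    set φ : ℕ → C(B, ℝ) := fun n => ⟨fs n, hfsc n⟩ with hφdef
    set ψ : ℕ → C(B, ℝ) := fun n => ⟨gs n, hgsc n⟩ with hψdef
    have hφt : Tendsto (fun n => ‖φ n - Φ‖) atTop (𝓝 0) :=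
      tendsto_iff_norm_sub_tendsto_zero.mp
        (ContinuousMap.tendsto_iff_tendstoUniformly.mpr hfsu)
    have hψt : Tendsto (fun n => ‖ψ n - Ψ‖) atTop (𝓝 0) :=
      tendsto_iff_norm_sub_tendsto_zero.mp
        (ContinuousMap.tendsto_iff_tendstoUniformly.mpr hgsu)
    set ε : ℕ → ℝ := fun n => ‖φ n - Φ‖ + ‖ψ n - Ψ‖ + 1 / (n + 1) with hεdef
    have hε0 : Tendsto ε atTop (𝓝 0) := by
      have h := (hφt.add hψt).add tendsto_one_div_add_atTop_nhds_zero_nat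
      rw [hεdef]
      simpa [one_div] using h
    have hεpos : ∀ n, 0 < ε n := by
      intro n
      have h1 : (0:ℝ) < 1 / ((n:ℝ) + 1) := by positivity
      have h2 := norm_nonneg (φ n - Φ)
      have h3 := norm_nonneg (ψ n - Ψ)
      simp only [hεdef]
      linarith
    have hfscl : ∀ n b, |fs n b - F b| < ε n := by
      intro n b
      have h1 : |fs n b - F b| ≤ ‖φ n - Φ‖ := by
        have h := ContinuousMap.norm_coe_le_norm (φ n - Φ) b
        simpa [hφdef, hΦ, Real.norm_eq_abs] using h
      have h2 : (0:ℝ) < 1 / ((n:ℝ) + 1) := by positivity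
      have h3 := norm_nonneg (ψ n - Ψ)
      simp only [hεdef]
      linarith
    have hgscl : ∀ n b, |gs n b - G b| < ε n := by
      intro n b
      have h1 : |gs n b - G b| ≤ ‖ψ n - Ψ‖ := by
        have h := ContinuousMap.norm_coe_le_norm (ψ n - Ψ) b
        simpa [hψdef, hΨ, Real.norm_eq_abs] using h
      have h2 : (0:ℝ) < 1 / ((n:ℝ) + 1) := by positivity
      have h3 := norm_nonneg (φ n - Φ)
      simp only [hεdef]
      linarith
    set M : ℝ := ‖Φ‖ + ‖Ψ‖ + 1 with hMdef
    have hM : 0 < M := by positivity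
    have hFM : ∀ b, F b ≤ M := by
      intro b
      have h1 : |F b| ≤ ‖Φ‖ := by
        have h := ContinuousMap.norm_coe_le_norm Φ b
        simpa [hΦ, Real.norm_eq_abs] using h
      have h2 := le_abs_self (F b)
      have h3 := norm_nonneg Ψ
      simp only [hMdef]
      linarith
    have hGM : ∀ b, G b ≤ M := by
      intro b
      have h1 : |G b| ≤ ‖Ψ‖ := by
        have h := ContinuousMap.norm_coe_le_norm Ψ b
        simpa [hΨ, Real.norm_eq_abs] using h
      have h2 := le_abs_self (G b)
      have h3 := norm_nonneg Φ
      simp only [hMdef]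
      linarith
    set u : ℕ → B → ℝ := fun n b => min (max (fs n b - ε n) 0) M with hudef
    set v : ℕ → B → ℝ := fun n b => min (max (gs n b - ε n) 0) M with hvdef
    have huc : ∀ n, Continuous (u n) := fun n =>
      (((hfsc n).sub continuous_const).max continuous_const).min continuous_const
    have hvc : ∀ n, Continuous (v n) := fun n =>
      (((hgsc n).sub continuous_const).max continuous_const).min continuous_const
    have hsupp : ∀ (n : ℕ) (h H : B → ℝ), (∀ b, |h b - H b| < ε n) →
        tsupport ((A n).restrict (fun b => min (max (h b - ε n) 0) M))
          ⊆ Subtype.val ⁻¹' tsupport H := by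
      intro n h H hcl
      apply closure_minimal _ ((isClosed_tsupport H).preimage continuous_subtype_val)
      intro x hx
      have hx' : min (max (h ↑x - ε n) 0) M ≠ 0 := hx
      have h1 : ε n < h ↑x := by
        by_contra hcon
        push_neg at hcon
        exact hx' (by rw [max_eq_right (by linarith), min_eq_left hM.le])
      have h2 := abs_lt.mp (hcl ↑x)
      have h3 : 0 < H ↑x := by linarith [h2.1]
      exact subset_tsupport H (ne_of_gt h3)
    have hEf : Tendsto (fun n => exEn (RF n) ((A n).restrict (fs n))) atTop
        (𝓝 ((RFinf.en f f : ℝ) : EReal)) := by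
      have heq : exEn RFinf (Ainf.restrict F) = ((RFinf.en f f : ℝ) : EReal) := by
        rw [hFr]
        unfold exEn
        rw [if_pos hf]
      rw [← heq]
      exact hfst
    have hEg : Tendsto (fun n => exEn (RF n) ((A n).restrict (gs n))) atTop
        (𝓝 ((RFinf.en g g : ℝ) : EReal)) := by
      have heq : exEn RFinf (Ainf.restrict G) = ((RFinf.en g g : ℝ) : EReal) := by
        rw [hGr]
        unfold exEn
        rw [if_pos hg]
      rw [← heq]
      exact hgst
    have hulip : ∀ n b, |u n b - F b| ≤ 2 * ε n := by
      intro n b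
      have h0 := cutoff_lipschitz (fs n b - ε n) (F b) M
      rw [max_eq_left (hFnn b), min_eq_left (hFM b)] at h0
      have h2 : |fs n b - ε n - F b| ≤ |fs n b - F b| + ε n := by
        have heq : fs n b - ε n - F b = (fs n b - F b) + -(ε n) := by ring
        rw [heq]
        refine (abs_add_le _ _).trans ?_
        rw [abs_neg, abs_of_pos (hεpos n)]
      have h3 := (hfscl n b).le
      have h4 : |u n b - F b| ≤ |fs n b - ε n - F b| := h0
      linarith
    have hvlip : ∀ n b, |v n b - G b| ≤ 2 * ε n := by
      intro n b
      have h0 := cutoff_lipschitz (gs n b - ε n) (G b) M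
      rw [max_eq_left (hGnn b), min_eq_left (hGM b)] at h0
      have h2 : |gs n b - ε n - G b| ≤ |gs n b - G b| + ε n := by
        have heq : gs n b - ε n - G b = (gs n b - G b) + -(ε n) := by ring
        rw [heq]
        refine (abs_add_le _ _).trans ?_
        rw [abs_neg, abs_of_pos (hεpos n)]
      have h3 := (hgscl n b).le
      have h4 : |v n b - G b| ≤ |gs n b - ε n - G b| := h0
      linarith
    have husupp : ∀ n, tsupport ((A n).restrict (u n)) ⊆ Subtype.val ⁻¹' tsupport F :=
      fun n => hsupp n (fs n) F (fun b => hfscl n b)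
    have hvsupp : ∀ n, tsupport ((A n).restrict (v n)) ⊆ Subtype.val ⁻¹' tsupport G :=
      fun n => hsupp n (gs n) G (fun b => hgscl n b)
    have hueq : ∀ n, (fun x : ↥(A n) =>
        min (max ((A n).restrict (fs n) x - ε n) 0) M) = (A n).restrict (u n) :=
      fun n => rfl
    have hveq : ∀ n, (fun x : ↥(A n) =>
        min (max ((A n).restrict (gs n) x - ε n) 0) M) = (A n).restrict (v n) :=
      fun n => rfl
    clear_value Φ Ψ φ ψ ε M u v
    have main : ∀ σ : ℝ, σ ^ 2 = 1 → |σ| = 1 →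
        RFinf.en (f + σ • g) (f + σ • g) ≤ RFinf.en f f + RFinf.en g g := by
      intro σ hσ hσabs
      set w : ℕ → B → ℝ := fun n b => u n b + σ * v n b with hwdef
      set W : B → ℝ := fun b => F b + σ * G b with hWdef
      have hwc : ∀ n, Continuous (w n) := fun n =>
        (huc n).add (continuous_const.mul (hvc n))
      have hWc : Continuous W := hFc.add (continuous_const.mul hGc)
      have hwu : TendstoUniformly w W atTop := by
        rw [Metric.tendstoUniformly_iff]
        intro δ hδ
        filter_upwards [hε0.eventually_lt_const (show (0:ℝ) < δ / 4 by linarith)]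
          with n hn b
        rw [Real.dist_eq]
        have h1 := hulip n b
        have h2 := hvlip n b
        have h5 : |W b - w n b| ≤ |F b - u n b| + |σ| * |G b - v n b| := by
          have heq : W b - w n b = (F b - u n b) + σ * (G b - v n b) := by
            simp only [hWdef, hwdef]
            ring
          rw [heq]
          refine (abs_add_le _ _).trans ?_
          rw [abs_mul]
        rw [abs_sub_comm (F b) (u n b)] at h5
        rw [abs_sub_comm (G b) (v n b)] at h5
        rw [hσabs, one_mul] at h5
        have h6 := hεpos n
        calc |W b - w n b| ≤ |u n b - F b| + |v n b - G b| := h5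
          _ < δ := by linarith
      have hWr : Ainf.restrict W = f + σ • g := by
        funext x
        have h1 : F ↑x = f x := congrFun hFr x
        have h2 : G ↑x = g x := congrFun hGr x
        simp only [Set.restrict_apply, hWdef, Pi.add_apply, Pi.smul_apply,
          smul_eq_mul, h1, h2]
        show F ↑x + σ * G ↑x = f x + σ * g x
        rw [h1, h2]
      clear_value w W
      have hdomfg : f + σ • g ∈ RFinf.dom :=
        RFinf.dom_add _ _ hf (RFinf.dom_smul _ _ hg)
      have hG1 := hGamma₁ w W hwc hWc hwu
      rw [hWr] at hG1
      have hexw : exEn RFinf (f + σ • g)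
          = ((RFinf.en (f + σ • g) (f + σ • g) : ℝ) : EReal) := by
        unfold exEn
        rw [if_pos hdomfg]
      rw [hexw] at hG1
      have hfinal : ∀ δ : ℝ, 0 < δ →
          RFinf.en (f + σ • g) (f + σ • g) ≤ RFinf.en f f + RFinf.en g g + δ := by
        intro δ hδ
        have e1 : ∀ᶠ n in atTop, exEn (RF n) ((A n).restrict (fs n))
            < ((RFinf.en f f + δ / 2 : ℝ) : EReal) :=
          hEf.eventually_lt_const (EReal.coe_lt_coe_iff.mpr (by linarith))
        have e2 : ∀ᶠ n in atTop, exEn (RF n) ((A n).restrict (gs n))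
            < ((RFinf.en g g + δ / 2 : ℝ) : EReal) :=
          hEg.eventually_lt_const (EReal.coe_lt_coe_iff.mpr (by linarith))
        have ebound : ∀ᶠ n in atTop, exEn (RF n) ((A n).restrict (w n))
            ≤ ((RFinf.en f f + RFinf.en g g + δ : ℝ) : EReal) := by
          filter_upwards [e1, e2] with n h1 h2
          have hhd : (A n).restrict (fs n) ∈ (RF n).dom := by
            by_contra hcon
            unfold exEn at h1
            rw [if_neg hcon] at h1
            exact not_top_lt h1
          have hkd : (A n).restrict (gs n) ∈ (RF n).dom := by
            by_contra hcon
            unfold exEn at h2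
            rw [if_neg hcon] at h2
            exact not_top_lt h2
          have hh1 : (RF n).en ((A n).restrict (fs n)) ((A n).restrict (fs n))
              ≤ RFinf.en f f + δ / 2 := by
            unfold exEn at h1
            rw [if_pos hhd] at h1
            exact (EReal.coe_lt_coe_iff.mp h1).le
          have hk1 : (RF n).en ((A n).restrict (gs n)) ((A n).restrict (gs n))
              ≤ RFinf.en g g + δ / 2 := by
            unfold exEn at h2
            rw [if_pos hkd] at h2
            exact (EReal.coe_lt_coe_iff.mp h2).le
          obtain ⟨hund, hune⟩ :=
            (RF n).cutoff_spec ((A n).restrict (fs n)) hhd (ε n) M hM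
          obtain ⟨hvnd, hvne⟩ :=
            (RF n).cutoff_spec ((A n).restrict (gs n)) hkd (ε n) M hM
          rw [hueq n] at hund hune
          rw [hveq n] at hvnd hvne
          have hcross : (RF n).en ((A n).restrict (u n)) ((A n).restrict (v n)) = 0 := by
            apply hlocal n _ hund _ hvnd
            have hpre : Disjoint (Subtype.val ⁻¹' tsupport F : Set ↥(A n))
                (Subtype.val ⁻¹' tsupport G) := hFGdisj.preimage _
            exact hpre.mono (husupp n) (hvsupp n)
          have hwreq : (A n).restrict (w n)
              = (A n).restrict (u n) + σ • (A n).restrict (v n) := by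
            funext x
            simp only [hwdef, Set.restrict_apply, Pi.add_apply, Pi.smul_apply,
              smul_eq_mul]
            rfl
          have hwnd : (A n).restrict (u n) + σ • (A n).restrict (v n) ∈ (RF n).dom :=
            (RF n).dom_add _ _ hund ((RF n).dom_smul _ _ hvnd)
          have hexp := (RF n).en_expand ((A n).restrict (u n)) ((A n).restrict (v n))
            σ hund hvnd
          have hx : exEn (RF n) ((A n).restrict (w n))
              = (((RF n).en ((A n).restrict (u n) + σ • (A n).restrict (v n))
                  ((A n).restrict (u n) + σ • (A n).restrict (v n)) : ℝ) : EReal) := by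
            rw [hwreq]
            unfold exEn
            rw [if_pos hwnd]
          rw [hx, EReal.coe_le_coe_iff, hexp, hcross, hσ]
          have h9 : 2 * σ * 0 = 0 := by ring
          rw [h9, one_mul]
          linarith
        have hliminf : Filter.liminf
            (fun n => exEn (RF n) ((A n).restrict (w n))) atTop
            ≤ ((RFinf.en f f + RFinf.en g g + δ : ℝ) : EReal) :=
          Filter.liminf_le_of_frequently_le ebound.frequently
        exact EReal.coe_le_coe_iff.mp (le_trans hG1 hliminf)
      exact le_of_forall_pos_le_add hfinal
    have h1 := main 1 (by norm_num) (by norm_num)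
    have h2 := main (-1) (by norm_num) (by norm_num)
    rw [RFinf.en_expand f g 1 hf hg] at h1
    rw [RFinf.en_expand f g (-1) hf hg] at h2
    norm_num at h1 h2
    linarith
  intro f hf g hg hdisj
  have decomp : ∀ h ∈ RFinf.dom, ∃ p ∈ RFinf.dom, ∃ m ∈ RFinf.dom,
      (∀ x, 0 ≤ p x) ∧ (∀ x, 0 ≤ m x) ∧ h = p - m ∧
      tsupport p ⊆ tsupport h ∧ tsupport m ⊆ tsupport h := by
    intro h hh
    have hc := hdomcinf h hh
    obtain ⟨Mh, hMh⟩ : ∃ Mh : ℝ, ∀ x, |h x| ≤ Mh := by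
      have hcabs : Continuous fun x => |h x| := hc.abs
      obtain ⟨Mh, hMh⟩ := (isCompact_range hcabs).bddAbove
      exact ⟨Mh, fun x => hMh ⟨x, rfl⟩⟩
    set M' : ℝ := Mh + 1 with hM'def
    have hM' : 0 < M' := by
      have h0 := (abs_nonneg (h (Classical.arbitrary ↥Ainf))).trans
        (hMh (Classical.arbitrary ↥Ainf))
      simp only [hM'def]
      linarith
    obtain ⟨hpd, _⟩ := RFinf.cutoff_spec h hh 0 M' hM'
    have hnd : -h ∈ RFinf.dom := RFinf.dom_neg hh
    obtain ⟨hmd, _⟩ := RFinf.cutoff_spec (-h) hnd 0 M' hM'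
    have hp_eq : (fun x => min (max (h x - 0) 0) M') = fun x => max (h x) 0 := by
      funext x
      rw [sub_zero]
      exact min_eq_left (max_le (by linarith [le_abs_self (h x), hMh x]) hM'.le)
    have hm_eq : (fun x => min (max ((-h) x - 0) 0) M') = fun x => max (-h x) 0 := by
      funext x
      simp only [Pi.neg_apply]
      rw [sub_zero]
      exact min_eq_left (max_le (by linarith [neg_abs_le (h x), hMh x]) hM'.le)
    rw [hp_eq] at hpd
    rw [hm_eq] at hmd
    refine ⟨_, hpd, _, hmd, fun x => le_max_right _ _, fun x => le_max_right _ _,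
      ?_, ?_, ?_⟩
    · funext x
      simp only [Pi.sub_apply]
      rcases le_total (h x) 0 with hx | hx
      · rw [max_eq_right hx, max_eq_left (by linarith)]
        ring
      · rw [max_eq_left hx, max_eq_right (by linarith)]
        ring
    · apply closure_mono
      intro x hx
      simp only [Function.mem_support] at hx ⊢
      intro hzero
      apply hx
      rw [hzero]
      simp
    · apply closure_mono
      intro x hx
      simp only [Function.mem_support] at hx ⊢
      intro hzero
      apply hx
      rw [hzero]
      simp
  obtain ⟨p, hpd, m, hmd, hpnn, hmnn, hfpm, hps, hms⟩ := decomp f hf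
  obtain ⟨r, hrd, s, hsd, hrnn, hsnn, hgrs, hrsup, hssup⟩ := decomp g hg
  have z1 := key p hpd r hrd hpnn hrnn (hdisj.mono hps hrsup)
  have z2 := key p hpd s hsd hpnn hsnn (hdisj.mono hps hssup)
  have z3 := key m hmd r hrd hmnn hrnn (hdisj.mono hms hrsup)
  have z4 := key m hmd s hsd hmnn hsnn (hdisj.mono hms hssup)
  rw [hfpm, hgrs]
  rw [RFinf.en_sub_left p m (r - s) hpd hmd (RFinf.dom_sub hrd hsd),
    RFinf.en_sub_right p r s hpd hrd hsd,
    RFinf.en_sub_right m r s hmd hrd hsd]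
  rw [z1, z2, z3, z4]
  ring
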